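/- arXiv:1404.4279 — 6 statements merged into one kernel-verified Lean document; each statement's English description precedes it below -/
import Mathlib

section
/- Let S = ⊕_{k≥0} S_k be a commutative graded ring generated as a ring by S_0 and S_1, and let M = ⊕_{k≥0} M_k be a graded S-module such that each M_k is finitely generated as an S_0-module. Then M is finitely generated as an S-module if and only if the S-grading on M is simple, i.e., if and only if there exists an index k₀ such that S_1 · M_k = M_{k+1} for all k ≥ k₀. -/
/-- For an additive subgroup `A` of scalars and a set `T` of module elements,
`grSMul A T` is the additive subgroup generated by all products `a • t`
with `a ∈ A` and `t ∈ T`.  When `A` contains `1` (e.g. `A = S₀`) and is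
closed under multiplication, this is the `A`-submodule generated by `T`. -/
def grSMul {S M : Type*} [CommRing S] [AddCommGroup M] [Module S M]
    (A : AddSubgroup S) (T : Set M) : AddSubgroup M :=
  AddSubgroup.closure {x | ∃ a ∈ A, ∃ t ∈ T, x = a • t}

open DirectSum

section Aux

variable {S : Type*} [CommRing S] (𝒜 : ℕ → AddSubgroup S) [GradedRing 𝒜]

/-- `grD 𝒜 n` : the expected additive generators of the degree `n` part. -/
def grD : ℕ → AddSubgroup S
  | 0 => 𝒜 0
  | (n+1) => AddSubgroup.closure {x | ∃ b ∈ 𝒜 1, ∃ c ∈ 𝒜 n, x = b * c}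

theorem grD_mul {i j : ℕ} {a b : S} (hai : a ∈ 𝒜 i) (hbj : b ∈ 𝒜 j)
    (ha : a ∈ grD 𝒜 i) (hb : b ∈ grD 𝒜 j) : a * b ∈ grD 𝒜 (i + j) := by
  match i, j with
  | 0, 0 =>
    show a * b ∈ 𝒜 0
    simpa using SetLike.mul_mem_graded hai hbj
  | (i'+1), j =>
    have : (i'+1) + j = (i' + j) + 1 := by omega
    rw [this]
    refine AddSubgroup.closure_induction (fun x hx => ?_) (by simpa using zero_mem _)
      (fun x y _ _ px py => by rw [add_mul]; exact add_mem px py)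
      (fun x _ px => by rw [neg_mul]; exact neg_mem px) ha
    · obtain ⟨b₁, hb₁, c, hc, rfl⟩ := hx
      refine AddSubgroup.subset_closure ⟨b₁, hb₁, c * b, ?_, by ring⟩
      exact SetLike.mul_mem_graded hc hbj
  | 0, (j'+1) =>
    have : 0 + (j'+1) = j' + 1 := by omega
    rw [this]
    refine AddSubgroup.closure_induction (fun x hx => ?_) (by simpa using zero_mem _)
      (fun x y _ _ px py => by rw [mul_add]; exact add_mem px py)
      (fun x _ px => by rw [mul_neg]; exact neg_mem px) hb
    · obtain ⟨b₁, hb₁, c, hc, rfl⟩ := hx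
      refine AddSubgroup.subset_closure ⟨b₁, hb₁, a * c, ?_, by ring⟩
      have := SetLike.mul_mem_graded hai hc
      simpa using this

theorem grD_decompose
    (hgen : Subring.closure ((𝒜 0 : Set S) ∪ (𝒜 1 : Set S)) = ⊤) (s : S) :
    ∀ n : ℕ, (decompose 𝒜 s n : S) ∈ grD 𝒜 n := by
  classical
  have hs : s ∈ Subring.closure ((𝒜 0 : Set S) ∪ (𝒜 1 : Set S)) := by
    rw [hgen]; trivial
  induction hs using Subring.closure_induction with
  | mem x hx =>
    intro n
    rcases hx with hx | hx
    · rcases Nat.eq_zero_or_pos n with rfl | hn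
      · rw [decompose_of_mem_same 𝒜 hx]; exact hx
      · rw [decompose_of_mem_ne 𝒜 hx (by omega : (0:ℕ) ≠ n)]; exact zero_mem _
    · rcases eq_or_ne n 1 with rfl | hn
      · rw [decompose_of_mem_same 𝒜 hx]
        exact AddSubgroup.subset_closure ⟨x, hx, 1, SetLike.one_mem_graded 𝒜, (mul_one x).symm⟩
      · rw [decompose_of_mem_ne 𝒜 hx (Ne.symm hn)]; exact zero_mem _
  | zero => intro n; simp only [decompose_zero, DirectSum.zero_apply,
      ZeroMemClass.coe_zero]; exact zero_mem _
  | one =>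
    intro n
    rcases Nat.eq_zero_or_pos n with rfl | hn
    · rw [decompose_of_mem_same 𝒜 (SetLike.one_mem_graded 𝒜)]
      exact SetLike.one_mem_graded 𝒜
    · rw [decompose_of_mem_ne 𝒜 (SetLike.one_mem_graded 𝒜) (by omega : (0:ℕ) ≠ n)]
      exact zero_mem _
  | add x y hx hy px py =>
    intro n
    rw [decompose_add]
    simp only [DirectSum.add_apply, AddSubgroup.coe_add]
    exact add_mem (px n) (py n)
  | neg x hx px =>
    intro n
    rw [decompose_neg]
    rw [show ((-(decompose 𝒜 x)) n : S) = -((decompose 𝒜 x) n : S) by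
      rw [DFinsupp.neg_apply]; rfl]
    exact neg_mem (px n)
  | mul x y hx hy px py =>
    intro n
    rw [decompose_mul, DirectSum.coe_mul_apply]
    refine sum_mem fun ij hij => ?_
    rw [Finset.mem_filter] at hij
    rw [← hij.2]
    exact grD_mul 𝒜 (SetLike.coe_mem _) (SetLike.coe_mem _) (px ij.1) (py ij.2)

theorem mem_grD {n : ℕ} {s : S} (hgen : Subring.closure ((𝒜 0 : Set S) ∪ (𝒜 1 : Set S)) = ⊤)
    (hs : s ∈ 𝒜 n) : s ∈ grD 𝒜 n := by
  have := grD_decompose 𝒜 hgen s n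
  rwa [decompose_of_mem_same 𝒜 hs] at this

variable {M : Type*} [AddCommGroup M] [Module S M] (ℳ : ℕ → AddSubgroup M)
variable [SetLike.GradedSMul 𝒜 ℳ] [DirectSum.Decomposition ℳ]

theorem smul_mem_ℳ {i j : ℕ} {a : S} {x : M} (ha : a ∈ 𝒜 i) (hx : x ∈ ℳ j) :
    a • x ∈ ℳ (i + j) :=
  SetLike.GradedSMul.smul_mem ha hx

/-- Key lemma: a homogeneous element of positive degree `i` acting on `ℳ d`
lands in `grSMul (𝒜 1) (ℳ k)` when `i + d = k + 1`. -/
theorem smul_mem_grSMul (hgen : Subring.closure ((𝒜 0 : Set S) ∪ (𝒜 1 : Set S)) = ⊤)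
    {i d k : ℕ} (hidk : i + d = k + 1) (hi : 1 ≤ i) {a : S} (ha : a ∈ 𝒜 i)
    {x : M} (hx : x ∈ ℳ d) : a • x ∈ grSMul (𝒜 1) (ℳ k : Set M) := by
  obtain ⟨i', rfl⟩ : ∃ i', i = i' + 1 := ⟨i - 1, by omega⟩
  have ha' : a ∈ AddSubgroup.closure {y : S | ∃ b ∈ 𝒜 1, ∃ c ∈ 𝒜 i', y = b * c} :=
    mem_grD 𝒜 hgen ha
  refine AddSubgroup.closure_induction (fun y hy => ?_) (by rw [zero_smul]; exact zero_mem _)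
    (fun y z _ _ py pz => by rw [add_smul]; exact add_mem py pz)
    (fun y _ py => by rw [neg_smul]; exact neg_mem py) ha'
  · obtain ⟨b, hb, c, hc, rfl⟩ := hy
    rw [mul_smul]
    refine AddSubgroup.subset_closure ⟨b, hb, c • x, ?_, rfl⟩
    have := smul_mem_ℳ 𝒜 ℳ hc hx
    have hk : i' + d = k := by omega
    rwa [hk] at this

/-- The projection of `M` onto degree `n`, as an `AddMonoidHom`. -/
def projHom (n : ℕ) : M →+ M :=
  AddMonoidHom.mk' (fun x => (decompose ℳ x n : M)) fun x y => by
    show ((decompose ℳ (x + y)) n : M) = _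
    rw [decompose_add, DFinsupp.add_apply, AddSubgroup.coe_add]

@[simp] theorem projHom_apply (n : ℕ) (x : M) : projHom ℳ n x = (decompose ℳ x n : M) := rfl

end Aux

/-- Technical Lemma: if the graded ring `S` is generated as a ring by `S₀` and `S₁`,
and each component `M_k` of the graded `S`-module `M` is a finitely generated
`S₀`-module, then `M` is finitely generated over `S` if and only if the grading
on `M` is simple, i.e. `S₁ • M_k = M_{k+1}` for all sufficiently large `k`. -/
theorem fg_iff_simple_grading
    {S : Type*} [CommRing S] (𝒜 : ℕ → AddSubgroup S) [GradedRing 𝒜]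
    {M : Type*} [AddCommGroup M] [Module S M] (ℳ : ℕ → AddSubgroup M)
    [SetLike.GradedSMul 𝒜 ℳ] [DirectSum.Decomposition ℳ]
    (hgen : Subring.closure ((𝒜 0 : Set S) ∪ (𝒜 1 : Set S)) = ⊤)
    (hcomp_fg : ∀ k : ℕ, ∃ T : Finset M, (T : Set M) ⊆ (ℳ k : Set M) ∧
      grSMul (𝒜 0) (T : Set M) = ℳ k) :
    Module.Finite S M ↔
      ∃ k₀ : ℕ, ∀ k ≥ k₀, grSMul (𝒜 1) (ℳ k : Set M) = ℳ (k + 1) := by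
  classical
  constructor
  · -- finite → simple grading
    intro hfin
    obtain ⟨F, hF⟩ := hfin.fg_top
    set k₀ : ℕ := F.sup (fun g => (decompose ℳ g).support.sup id) with hk₀
    refine ⟨k₀, fun k hk => ?_⟩
    -- the key projection lemma
    have key : ∀ (s : S) (g : M), (∀ d ∈ (decompose ℳ g).support, d ≤ k) →
        projHom ℳ (k+1) (s • g) ∈ grSMul (𝒜 1) (ℳ k : Set M) := by
      intro s g hgd
      have hssum := DirectSum.sum_support_decompose 𝒜 s
      have hgsum := DirectSum.sum_support_decompose ℳ g
      rw [show s • g = ∑ i ∈ (decompose 𝒜 s).support, ∑ d ∈ (decompose ℳ g).support,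
          (decompose 𝒜 s i : S) • (decompose ℳ g d : M) by
        conv_lhs => rw [← hssum, ← hgsum]
        rw [Finset.sum_smul]
        exact Finset.sum_congr rfl fun i _ => Finset.smul_sum]
      rw [map_sum]
      refine sum_mem fun i _ => ?_
      rw [map_sum]
      refine sum_mem fun d hd => ?_
      have hmem : (decompose 𝒜 s i : S) • (decompose ℳ g d : M) ∈ ℳ (i + d) :=
        smul_mem_ℳ 𝒜 ℳ (SetLike.coe_mem _) (SetLike.coe_mem _)
      rcases eq_or_ne (i + d) (k + 1) with hidk | hidk
      · rw [projHom_apply, ← hidk, decompose_of_mem_same ℳ hmem]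
        have hdk : d ≤ k := hgd d hd
        exact smul_mem_grSMul 𝒜 ℳ hgen hidk (by omega) (SetLike.coe_mem _) (SetLike.coe_mem _)
      · rw [projHom_apply, decompose_of_mem_ne ℳ hmem hidk]
        exact zero_mem _
    refine le_antisymm ?_ ?_
    · -- grSMul (𝒜 1) (ℳ k) ≤ ℳ (k+1)
      refine (AddSubgroup.closure_le _).mpr ?_
      rintro x ⟨a, ha, t, ht, rfl⟩
      have := smul_mem_ℳ 𝒜 ℳ ha ht
      rwa [show 1 + k = k + 1 by omega] at this
    · -- ℳ (k+1) ≤ grSMul (𝒜 1) (ℳ k)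
      intro m hm
      have hmspan : m ∈ Submodule.span S (F : Set M) := by rw [hF]; trivial
      obtain ⟨f, -, hf⟩ := Submodule.mem_span_finset.mp hmspan
      have hπ : projHom ℳ (k+1) m = m := decompose_of_mem_same ℳ hm
      rw [← hπ, ← hf, map_sum]
      refine sum_mem fun g hg => ?_
      refine key (f g) g fun d hd => ?_
      have h1 : (decompose ℳ g).support.sup id ≤ k₀ :=
        Finset.le_sup (f := fun g => (decompose ℳ g).support.sup id) hg
      have h2 : id d ≤ (decompose ℳ g).support.sup id := Finset.le_sup hd
      simp only [id] at h2
      omega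
  · -- simple grading → finite
    rintro ⟨k₀, hsimple⟩
    choose T hTsub hTgen using hcomp_fg
    set F : Finset M := (Finset.range (k₀+1)).biUnion T with hFdef
    have hspan : ∀ n : ℕ, (ℳ n : Set M) ⊆ (Submodule.span S (F : Set M) : Set M) := by
      intro n
      induction n using Nat.strong_induction_on with
      | _ n ih =>
        by_cases hn : n ≤ k₀
        · rw [← hTgen n]
          have : grSMul (𝒜 0) (T n : Set M) ≤ (Submodule.span S (F : Set M)).toAddSubgroup := by
            refine (AddSubgroup.closure_le _).mpr ?_
            rintro x ⟨a, ha, t, ht, rfl⟩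
            refine Submodule.smul_mem _ a (Submodule.subset_span ?_)
            exact Finset.mem_coe.mpr (Finset.mem_biUnion.mpr ⟨n, Finset.mem_range.mpr
              (by omega), Finset.mem_coe.mp ht⟩)
          exact fun x hx => this hx
        · obtain ⟨m', rfl⟩ : ∃ m', n = m' + 1 := ⟨n - 1, by omega⟩
          rw [← hsimple m' (by omega)]
          have : grSMul (𝒜 1) (ℳ m' : Set M) ≤
              (Submodule.span S (F : Set M)).toAddSubgroup := by
            refine (AddSubgroup.closure_le _).mpr ?_
            rintro x ⟨a, ha, t, ht, rfl⟩
            exact Submodule.smul_mem _ a (ih m' (by omega) ht)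
          exact fun x hx => this hx
    have htop : (⊤ : Submodule S M) ≤ Submodule.span S (F : Set M) := by
      intro m _
      rw [← DirectSum.sum_support_decompose ℳ m]
      exact sum_mem fun i _ => hspan i (SetLike.coe_mem _)
    exact ⟨⟨F, eq_top_iff.mpr htop⟩⟩
end

section
/- Let S = ⊕_{k≥0} S_k be a commutative graded ring generated as a ring by S_0 and S_1, and let M = ⊕_{k≥0} M_k be a long graded S-module such that: each M_k is finitely generated as an S_0-module; S_1 is finitely generated as an S_0-module; and the S-grading on M is simple. Then there exists an S-submodule L of M that is not saturated and such that the quotient S-module M/L is finitely generated as a module over the subring S_0. -/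
set_option linter.unusedSectionVars false

section Aux

variable {S : Type*} [CommRing S] (𝒜 : ℕ → AddSubgroup S) [GradedRing 𝒜]
  {M : Type*} [AddCommGroup M] [Module S M] (ℳ : ℕ → AddSubgroup M)
  [SetLike.GradedSMul 𝒜 ℳ] [DirectSum.Decomposition ℳ]

/-- degree-`d` projection -/
noncomputable def grProj (d : ℕ) (x : M) : M := (DirectSum.decompose ℳ x d : M)

variable {ℳ}

lemma grProj_mem (d : ℕ) (x : M) : grProj ℳ d x ∈ ℳ d := SetLike.coe_mem _

lemma grProj_add (d : ℕ) (x y : M) :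
    grProj ℳ d (x + y) = grProj ℳ d x + grProj ℳ d y := by
  simp [grProj, DirectSum.decompose_add]

lemma grProj_sub (d : ℕ) (x y : M) :
    grProj ℳ d (x - y) = grProj ℳ d x - grProj ℳ d y := by
  simp [grProj, DirectSum.decompose_sub]

lemma grProj_zero (d : ℕ) : grProj ℳ d (0 : M) = 0 := by
  simp [grProj]

lemma grProj_of_mem_same {d : ℕ} {x : M} (hx : x ∈ ℳ d) : grProj ℳ d x = x :=
  DirectSum.decompose_of_mem_same ℳ hx

lemma grProj_of_mem_ne {i d : ℕ} {x : M} (hx : x ∈ ℳ i) (h : i ≠ d) :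
    grProj ℳ d x = 0 :=
  DirectSum.decompose_of_mem_ne ℳ hx h

variable {𝒜}

lemma grProj_smul_succ {t : S} (ht : t ∈ 𝒜 1) (d : ℕ) (x : M) :
    grProj ℳ (d + 1) (t • x) = t • grProj ℳ d x := by
  induction x using DirectSum.Decomposition.inductionOn ℳ with
  | zero => simp [grProj_zero]
  | @homogeneous i m =>
      obtain ⟨m, hm⟩ := m
      have htm : t • m ∈ ℳ (i + 1) := by
        have := SetLike.GradedSMul.smul_mem ht hm
        simpa [vadd_eq_add, add_comm] using this
      by_cases hdi : d = i
      · subst hdi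
        rw [grProj_of_mem_same htm, grProj_of_mem_same hm]
      · rw [grProj_of_mem_ne htm (by omega), grProj_of_mem_ne hm (by omega), smul_zero]
  | add x y hx hy => rw [smul_add, grProj_add, grProj_add, hx, hy, smul_add]

lemma grProj_smul_zero' {t : S} (ht : t ∈ 𝒜 1) (x : M) :
    grProj ℳ 0 (t • x) = 0 := by
  induction x using DirectSum.Decomposition.inductionOn ℳ with
  | zero => simp [grProj_zero]
  | @homogeneous i m =>
      obtain ⟨m, hm⟩ := m
      have htm : t • m ∈ ℳ (i + 1) := by
        have := SetLike.GradedSMul.smul_mem ht hm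
        simpa [vadd_eq_add, add_comm] using this
      exact grProj_of_mem_ne htm (by omega)
  | add x y hx hy => rw [smul_add, grProj_add, hx, hy, add_zero]

lemma grProj_eventually_zero (x : M) : ∃ D : ℕ, ∀ d ≥ D, grProj ℳ d x = 0 := by
  induction x using DirectSum.Decomposition.inductionOn ℳ with
  | zero => exact ⟨0, fun d _ => grProj_zero d⟩
  | @homogeneous i m =>
      obtain ⟨m, hm⟩ := m
      exact ⟨i + 1, fun d hd => grProj_of_mem_ne hm (by omega)⟩
  | add x y hx hy =>
      obtain ⟨D1, h1⟩ := hx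
      obtain ⟨D2, h2⟩ := hy
      exact ⟨max D1 D2, fun d hd => by
        rw [grProj_add, h1 d (le_trans (le_max_left _ _) hd),
          h2 d (le_trans (le_max_right _ _) hd), add_zero]⟩

end Aux

set_option linter.unusedSectionVars false

section Key

variable {S : Type*} [CommRing S] {𝒜 : ℕ → AddSubgroup S} [GradedRing 𝒜]
  {M : Type*} [AddCommGroup M] [Module S M] {ℳ : ℕ → AddSubgroup M}
  [SetLike.GradedSMul 𝒜 ℳ] [DirectSum.Decomposition ℳ]

lemma key_lemma
    (hcomp_fg : ∀ k : ℕ, ∃ T : Finset M, (T : Set M) ⊆ (ℳ k : Set M) ∧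
      grSMul (𝒜 0) (T : Set M) = ℳ k)
    (T : Finset S) :
    (∀ t ∈ T, t ∈ 𝒜 1) → ∀ N : Submodule S M,
    (∀ d : ℕ, ∀ x ∈ N, grProj ℳ d x ∈ N) →
    (∃ k₂ : ℕ, ∀ k ≥ k₂, ∀ x ∈ ℳ (k + 1), ∃ f : S → M,
      (∀ t, f t ∈ ℳ k) ∧ x - ∑ t ∈ T, t • f t ∈ N) →
    (∀ k : ℕ, ∃ j ≥ k, ¬ (ℳ j : Set M) ⊆ (N : Set M)) →
    ∃ L : Submodule S M,
      ¬ (∃ k₀ : ℕ, ∀ k ≥ k₀, (ℳ k : Set M) ⊆ (L : Set M)) ∧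
      ∃ Q : Finset (M ⧸ L), grSMul (𝒜 0) (Q : Set (M ⧸ L)) = ⊤ := by
  classical
  induction T using Finset.induction_on with
  | empty =>
      intro _ N _ hsimp hlong
      obtain ⟨k₂, hs⟩ := hsimp
      obtain ⟨j, hj, hnot⟩ := hlong (k₂ + 1)
      exfalso; apply hnot
      obtain ⟨k, rfl⟩ : ∃ k, j = k + 1 := ⟨j - 1, by omega⟩
      intro x hx
      obtain ⟨f, hf, hx'⟩ := hs k (by omega) x hx
      simpa using hx'
  | @insert t T₀ htT₀ IH =>
      intro hT N hNgr hsimp hlong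
      have ht1 : t ∈ 𝒜 1 := hT t (Finset.mem_insert_self t T₀)
      by_cases hc : ∀ k : ℕ, ∃ j ≥ k,
          ¬ (ℳ j : Set M) ⊆ ((N ⊔ LinearMap.range (LinearMap.lsmul S M t) : Submodule S M) : Set M)
      · -- Case 1 : quotient by t·M stays long; use induction hypothesis
        set N' : Submodule S M := N ⊔ LinearMap.range (LinearMap.lsmul S M t) with hN'def
        refine IH (fun t' ht' => hT t' (Finset.mem_insert_of_mem ht')) N' ?_ ?_ hc
        · intro d x hx
          rw [hN'def, Submodule.mem_sup] at hx
          obtain ⟨n, hn, z, hz, rfl⟩ := hx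
          obtain ⟨y, rfl⟩ := hz
          simp only [LinearMap.lsmul_apply]
          rw [grProj_add]
          refine Submodule.add_mem _ (Submodule.mem_sup_left (hNgr d n hn)) ?_
          rcases d with _ | e
          · rw [grProj_smul_zero' ht1]; exact Submodule.zero_mem _
          · rw [grProj_smul_succ ht1]
            exact Submodule.mem_sup_right ⟨grProj ℳ e y, rfl⟩
        · obtain ⟨k₂, hs⟩ := hsimp
          refine ⟨k₂, fun k hk x hx => ?_⟩
          obtain ⟨f, hf, hmem⟩ := hs k hk x hx
          refine ⟨f, hf, ?_⟩
          have : x - ∑ t' ∈ T₀, t' • f t' =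
              (x - ∑ t' ∈ insert t T₀, t' • f t') + t • f t := by
            rw [Finset.sum_insert htT₀]; abel
          rw [this]
          exact Submodule.add_mem _ (Submodule.mem_sup_left hmem)
            (Submodule.mem_sup_right ⟨f t, rfl⟩)
      · -- Case 2 : M_j ⊆ N + t·M for all large j
        push_neg at hc
        obtain ⟨k₃, hk₃⟩ := hc
        have hstar : ∀ k : ℕ, k + 1 ≥ k₃ → ∀ x ∈ ℳ (k + 1),
            ∃ y ∈ ℳ k, x - t • y ∈ N := by
          intro k hk x hx
          have hx' := hk₃ (k + 1) hk hx
          rw [SetLike.mem_coe, Submodule.mem_sup] at hx'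
          obtain ⟨n, hn, z, hz, heq⟩ := hx'
          obtain ⟨y, rfl⟩ := hz
          simp only [LinearMap.lsmul_apply] at heq
          refine ⟨grProj ℳ k y, grProj_mem k y, ?_⟩
          have e1 : grProj ℳ (k + 1) x = grProj ℳ (k + 1) n + t • grProj ℳ k y := by
            rw [← heq, grProj_add, grProj_smul_succ ht1]
          have e2 : x - t • grProj ℳ k y = grProj ℳ (k + 1) n := by
            rw [← grProj_of_mem_same hx, e1]; abel
          rw [e2]; exact hNgr _ n hn
        set L : Submodule S M := N ⊔ LinearMap.range (LinearMap.lsmul S M (t - 1)) with hLdef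
        -- every element of a positive component lying in L is killed by a power of t mod N
        have hkey : ∀ j : ℕ, 1 ≤ j → ∀ m ∈ ℳ j, (m : M) ∈ L → ∃ r : ℕ, t ^ r • m ∈ N := by
          intro j hj m hmj hmL
          obtain ⟨jj, rfl⟩ : ∃ jj, j = jj + 1 := ⟨j - 1, by omega⟩
          rw [hLdef, Submodule.mem_sup] at hmL
          obtain ⟨n, hn, z, hz, heq⟩ := hmL
          obtain ⟨x, rfl⟩ := hz
          simp only [LinearMap.lsmul_apply] at heq
          have heqd : ∀ d, grProj ℳ d m
              = grProj ℳ d n + grProj ℳ d (t • x) - grProj ℳ d x := by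
            intro d
            rw [← heq, sub_smul, one_smul, grProj_add, grProj_sub]
            abel
          have c1 : ∀ d, d ≤ jj → grProj ℳ d x ∈ N := by
            intro d
            induction d with
            | zero =>
                intro _
                have h0 := heqd 0
                rw [grProj_of_mem_ne hmj (by omega), grProj_smul_zero' ht1] at h0
                rw [add_zero, eq_comm, sub_eq_zero] at h0
                rw [← h0]; exact hNgr 0 n hn
            | succ d ihd =>
                intro hle
                have h0 := heqd (d + 1)
                rw [grProj_of_mem_ne hmj (by omega), grProj_smul_succ ht1] at h0
                rw [eq_comm, sub_eq_zero] at h0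
                rw [← h0]
                exact N.add_mem (hNgr _ n hn) (N.smul_mem t (ihd (by omega)))
          have c2 : ∀ r : ℕ, grProj ℳ (jj + 1 + r) x + t ^ r • m ∈ N := by
            intro r
            induction r with
            | zero =>
                have h0 := heqd (jj + 1)
                rw [grProj_of_mem_same hmj, grProj_smul_succ ht1] at h0
                have e : grProj ℳ (jj + 1 + 0) x + t ^ 0 • m
                    = grProj ℳ (jj + 1) n + t • grProj ℳ jj x := by
                  rw [pow_zero, one_smul]
                  have hidx : (jj + 1 + 0) = jj + 1 := by omega
                  rw [hidx, h0]
                  abel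
                rw [e]
                exact N.add_mem (hNgr _ n hn) (N.smul_mem t (c1 jj le_rfl))
            | succ r ihr =>
                have h0 := heqd (jj + 1 + r + 1)
                rw [grProj_of_mem_ne hmj (by omega), grProj_smul_succ ht1] at h0
                rw [eq_comm, sub_eq_zero] at h0
                have e : grProj ℳ (jj + 1 + (r + 1)) x + t ^ (r + 1) • m
                    = grProj ℳ (jj + 1 + r + 1) n
                      + t • (grProj ℳ (jj + 1 + r) x + t ^ r • m) := by
                  rw [smul_add, smul_smul]
                  have ht' : t * t ^ r = t ^ (r + 1) := by ring
                  rw [ht']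
                  have hidx : (jj + 1 + (r + 1)) = jj + 1 + r + 1 := by omega
                  rw [hidx, ← h0]
                  abel
                rw [e]
                exact N.add_mem (hNgr _ n hn) (N.smul_mem t ihr)
          obtain ⟨D, hD⟩ := grProj_eventually_zero (ℳ := ℳ) x
          refine ⟨D, ?_⟩
          have := c2 D
          rwa [hD (jj + 1 + D) (by omega), zero_add] at this
        refine ⟨L, ?_, ?_⟩
        · -- L is not saturated
          rintro ⟨r₀, hr⟩
          set j₀ : ℕ := r₀ + k₃ + 1 with hj₀def
          obtain ⟨U, hU1, hU2⟩ := hcomp_fg j₀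
          have hUr : ∀ u : M, ∃ r : ℕ, u ∈ U → t ^ r • u ∈ N := by
            intro u
            by_cases hu : u ∈ U
            · obtain ⟨r, hrr⟩ := hkey j₀ (by omega) u (hU1 hu)
                (hr j₀ (by omega) (hU1 hu))
              exact ⟨r, fun _ => hrr⟩
            · exact ⟨0, fun h => absurd h hu⟩
          choose rr hrr using hUr
          set R : ℕ := U.sup rr with hRdef
          have hRN : ∀ m ∈ ℳ j₀, t ^ R • m ∈ N := by
            intro m hm
            rw [← hU2] at hm
            refine AddSubgroup.closure_induction ?_ ?_ ?_ ?_ hm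
            · rintro x ⟨a, _ha, u, hu, rfl⟩
              have h1 : t ^ (rr u) • u ∈ N := hrr u hu
              have h2 : t ^ R • u ∈ N := by
                have hle : rr u ≤ R := Finset.le_sup hu
                have hexp : R - rr u + rr u = R := Nat.sub_add_cancel hle
                have heq2 : t ^ R • u = t ^ (R - rr u) • (t ^ (rr u) • u) := by
                  rw [smul_smul, ← pow_add, hexp]
                rw [heq2]; exact N.smul_mem _ h1
              have : t ^ R • (a • u) = a • (t ^ R • u) := smul_comm _ _ _
              rw [this]; exact N.smul_mem a h2
            · rw [smul_zero]; exact N.zero_mem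
            · intro x y _ _ hx hy
              rw [smul_add]; exact N.add_mem hx hy
            · intro x _ hx
              rw [smul_neg]; exact N.neg_mem hx
          have h3 : ∀ r : ℕ, ∀ x ∈ ℳ (j₀ + r), ∃ y ∈ ℳ j₀, x - t ^ r • y ∈ N := by
            intro r
            induction r with
            | zero => exact fun x hx => ⟨x, hx, by rw [pow_zero, one_smul, sub_self]; exact N.zero_mem⟩
            | succ r ih =>
                intro x hx
                obtain ⟨y', hy', hyN⟩ := hstar (j₀ + r) (by omega) x
                  (by rwa [show j₀ + (r + 1) = (j₀ + r) + 1 from rfl] at hx)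
                obtain ⟨y, hy, hyN2⟩ := ih y' hy'
                refine ⟨y, hy, ?_⟩
                have e : x - t ^ (r + 1) • y = (x - t • y') + t • (y' - t ^ r • y) := by
                  rw [smul_sub, smul_smul]
                  have ht' : t * t ^ r = t ^ (r + 1) := by ring
                  rw [ht']; abel
                rw [e]; exact N.add_mem hyN (N.smul_mem t hyN2)
          have hbase : (ℳ (j₀ + R) : Set M) ⊆ (N : Set M) := by
            intro x hx
            obtain ⟨y, hy, hN⟩ := h3 R x hx
            have h2 := hRN y hy
            have : x = (x - t ^ R • y) + t ^ R • y := by abel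
            rw [this]; exact N.add_mem hN h2
          have htail : ∀ s : ℕ, (ℳ (j₀ + R + s) : Set M) ⊆ (N : Set M) := by
            intro s
            induction s with
            | zero => exact hbase
            | succ s ih =>
                intro x hx
                obtain ⟨y, hy, hN⟩ := hstar (j₀ + R + s) (by omega) x
                  (by rwa [show j₀ + R + (s + 1) = (j₀ + R + s) + 1 from rfl] at hx)
                have hyN : y ∈ N := ih hy
                have : x = (x - t • y) + t • y := by abel
                rw [this]; exact N.add_mem hN (N.smul_mem t hyN)
          obtain ⟨j, hj, hnot⟩ := hlong (j₀ + R)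
          apply hnot
          have : j = j₀ + R + (j - (j₀ + R)) := by omega
          rw [this]
          exact htail _
        · -- M ⧸ L is finitely generated over 𝒜 0
          choose U hU1 hU2 using hcomp_fg
          set Q : Finset (M ⧸ L) :=
            (Finset.range (k₃ + 1)).biUnion (fun k => (U k).image (fun u => L.mkQ u)) with hQdef
          refine ⟨Q, ?_⟩
          rw [AddSubgroup.eq_top_iff']
          intro z
          obtain ⟨m, rfl⟩ := Submodule.mkQ_surjective L z
          have hdeg : ∀ d : ℕ, ∀ m ∈ ℳ d, L.mkQ m ∈ grSMul (𝒜 0) (Q : Set (M ⧸ L)) := by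
            intro d
            induction d using Nat.strong_induction_on with
            | _ d ih =>
              intro m hm
              by_cases hd : d ≤ k₃
              · rw [← hU2 d] at hm
                refine AddSubgroup.closure_induction ?_ ?_ ?_ ?_ hm
                · rintro x ⟨a, ha, u, hu, rfl⟩
                  rw [map_smul]
                  refine AddSubgroup.subset_closure ⟨a, ha, L.mkQ u, ?_, rfl⟩
                  rw [hQdef]
                  simp only [Finset.coe_biUnion, Finset.coe_image, Set.mem_iUnion]
                  exact ⟨d, Finset.mem_coe.mpr (Finset.mem_range.mpr (by omega)),
                    Set.mem_image_of_mem _ hu⟩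
                · rw [map_zero]; exact AddSubgroup.zero_mem _
                · intro x y _ _ hx hy; rw [map_add]; exact AddSubgroup.add_mem _ hx hy
                · intro x _ hx; rw [map_neg]; exact AddSubgroup.neg_mem _ hx
              · obtain ⟨k, rfl⟩ : ∃ k, d = k + 1 := ⟨d - 1, by omega⟩
                obtain ⟨y, hy, hN⟩ := hstar k (by omega) m hm
                have h1 : L.mkQ (m - t • y) = 0 := by
                  rw [Submodule.mkQ_apply, Submodule.Quotient.mk_eq_zero]
                  exact Submodule.mem_sup_left hN
                have h2 : L.mkQ ((t - 1) • y) = 0 := by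
                  rw [Submodule.mkQ_apply, Submodule.Quotient.mk_eq_zero]
                  exact Submodule.mem_sup_right ⟨y, rfl⟩
                have e : m = y + (m - t • y) + (t - 1) • y := by
                  rw [sub_smul, one_smul]; abel
                have : L.mkQ m = L.mkQ y := by
                  rw [e, map_add, map_add, h1, h2, add_zero, add_zero]
                rw [this]
                exact ih k (by omega) y hy
          induction m using DirectSum.Decomposition.inductionOn ℳ with
          | zero => rw [map_zero]; exact AddSubgroup.zero_mem _
          | @homogeneous i mi =>
              obtain ⟨mi, hmi⟩ := mi
              exact hdeg i mi hmi
          | add x y hx hy => rw [map_add]; exact AddSubgroup.add_mem _ hx hy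

end Key


/-- Finiteness theorem (generalizing Cartier–Tate).  Let `S` be a commutative graded
ring generated as a ring by `S₀` and `S₁`, and let `M` be a *long* graded `S`-module
(components non-zero for arbitrarily large indices) such that each `M_k` is finitely
generated over `S₀`, `S₁` is finitely generated over `S₀`, and the grading on `M` is
simple.  Then there is an `S`-submodule `L` of `M` which is *not* saturated and such
that `M/L` is finitely generated as an `S₀`-module. -/
theorem exists_nonsaturated_with_fg_quotient
    {S : Type*} [CommRing S] (𝒜 : ℕ → AddSubgroup S) [GradedRing 𝒜]
    {M : Type*} [AddCommGroup M] [Module S M] (ℳ : ℕ → AddSubgroup M)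
    [SetLike.GradedSMul 𝒜 ℳ] [DirectSum.Decomposition ℳ]
    (hgen : Subring.closure ((𝒜 0 : Set S) ∪ (𝒜 1 : Set S)) = ⊤)
    (hcomp_fg : ∀ k : ℕ, ∃ T : Finset M, (T : Set M) ⊆ (ℳ k : Set M) ∧
      grSMul (𝒜 0) (T : Set M) = ℳ k)
    (hS1_fg : ∃ T : Finset S, (T : Set S) ⊆ (𝒜 1 : Set S) ∧
      grSMul (𝒜 0) (T : Set S) = 𝒜 1)
    (hlong : ∀ k : ℕ, ∃ j ≥ k, ℳ j ≠ ⊥)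
    (hsimple : ∃ k₀ : ℕ, ∀ k ≥ k₀, grSMul (𝒜 1) (ℳ k : Set M) = ℳ (k + 1)) :
    ∃ L : Submodule S M,
      ¬ (∃ k₀ : ℕ, ∀ k ≥ k₀, (ℳ k : Set M) ⊆ (L : Set M)) ∧
      ∃ T : Finset (M ⧸ L), grSMul (𝒜 0) (T : Set (M ⧸ L)) = ⊤ := by
  classical
  obtain ⟨T, hT1, hT2⟩ := hS1_fg
  obtain ⟨k₀, hs⟩ := hsimple
  refine key_lemma hcomp_fg T (fun t ht => hT1 (Finset.mem_coe.mpr ht)) ⊥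
    (fun d x hx => ?_) ⟨k₀, fun k hk x hx => ?_⟩ (fun k => ?_)
  · rw [Submodule.mem_bot] at hx; subst hx
    rw [grProj_zero]; exact Submodule.zero_mem _
  · rw [← hs k hk] at hx
    have hout : ∃ f : S → M, (∀ t, f t ∈ ℳ k) ∧ x = ∑ t ∈ T, t • f t := by
      refine AddSubgroup.closure_induction
        (p := fun x _ => ∃ f : S → M, (∀ t, f t ∈ ℳ k) ∧ x = ∑ t ∈ T, t • f t)
        ?_ ?_ ?_ ?_ hx
      · rintro z ⟨a, ha, m, hm, rfl⟩
        rw [← hT2] at ha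
        refine AddSubgroup.closure_induction
          (p := fun a _ => ∃ f : S → M, (∀ t, f t ∈ ℳ k) ∧ a • m = ∑ t ∈ T, t • f t)
          ?_ ?_ ?_ ?_ ha
        · rintro b ⟨c, hc, t₀, ht₀, rfl⟩
          have hcm : c • m ∈ ℳ k := by
            have := SetLike.GradedSMul.smul_mem hc hm
            simpa [vadd_eq_add] using this
          refine ⟨fun s => if s = t₀ then c • m else 0, ?_, ?_⟩
          · intro s
            by_cases hst : s = t₀
            · simpa [hst] using hcm
            · simpa [hst] using (ℳ k).zero_mem
          · have hsum : ∑ s ∈ T, s • (if s = t₀ then c • m else 0)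
                = ∑ s ∈ T, (if s = t₀ then t₀ • (c • m) else 0) := by
              refine Finset.sum_congr rfl fun s _ => ?_
              by_cases hst : s = t₀
              · rw [if_pos hst, if_pos hst, hst]
              · rw [if_neg hst, if_neg hst, smul_zero]
            rw [hsum, Finset.sum_ite_eq' T t₀ (fun _ => t₀ • (c • m)),
              if_pos (Finset.mem_coe.mp ht₀)]
            rw [smul_eq_mul, mul_comm, mul_smul]
        · exact ⟨0, fun t => (ℳ k).zero_mem, by simp⟩
        · rintro a b _ _ ⟨f, hf, hfe⟩ ⟨g, hg, hge⟩
          refine ⟨f + g, fun t => (ℳ k).add_mem (hf t) (hg t), ?_⟩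
          rw [add_smul, hfe, hge, ← Finset.sum_add_distrib]
          refine Finset.sum_congr rfl fun s _ => ?_
          simp [smul_add]
        · rintro a _ ⟨f, hf, hfe⟩
          refine ⟨-f, fun t => (ℳ k).neg_mem (hf t), ?_⟩
          rw [neg_smul, hfe, ← Finset.sum_neg_distrib]
          refine Finset.sum_congr rfl fun s _ => ?_
          simp
      · exact ⟨0, fun t => (ℳ k).zero_mem, by simp⟩
      · rintro a b _ _ ⟨f, hf, hfe⟩ ⟨g, hg, hge⟩
        refine ⟨f + g, fun t => (ℳ k).add_mem (hf t) (hg t), ?_⟩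
        rw [hfe, hge, ← Finset.sum_add_distrib]
        refine Finset.sum_congr rfl fun s _ => ?_
        simp [smul_add]
      · rintro a _ ⟨f, hf, hfe⟩
        refine ⟨-f, fun t => (ℳ k).neg_mem (hf t), ?_⟩
        rw [hfe, ← Finset.sum_neg_distrib]
        refine Finset.sum_congr rfl fun s _ => ?_
        simp
    obtain ⟨f, hf, hfe⟩ := hout
    exact ⟨f, hf, by rw [hfe]; simp⟩
  · obtain ⟨j, hj, hne⟩ := hlong k
    refine ⟨j, hj, fun hsub => hne ?_⟩
    rw [AddSubgroup.eq_bot_iff_forall]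
    intro x hx
    simpa using hsub hx
end

section
/- Let F be a field and S = F[X_0, X_1, ..., X_n] the polynomial ring graded by total degree. If J is a homogeneous ideal of S that is non-saturated (i.e., J does not contain all homogeneous polynomials of degree ≥ k for any k), then J has a non-trivial zero over an algebraic closure K of F: there exist elements x_0, x_1, ..., x_n of K, not all zero, such that f(x_0, x_1, ..., x_n) = 0 for every polynomial f in J. -/
open MvPolynomial

/-- Descent of ideal membership along a field extension: if the image of an `F`-polynomial
`g` lies in the extension of an ideal `J` to `K[X]`, then `g ∈ J`. -/
lemma mem_of_map_mem_map {F K : Type*} [Field F] [Field K] [Algebra F K] {σ : Type*}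
    (J : Ideal (MvPolynomial σ F)) (g : MvPolynomial σ F)
    (hg : MvPolynomial.map (algebraMap F K) g ∈
      J.map (MvPolynomial.map (algebraMap F K) :
        MvPolynomial σ F →+* MvPolynomial σ K)) :
    g ∈ J := by
  classical
  set φ : MvPolynomial σ F →+* MvPolynomial σ K := MvPolynomial.map (algebraMap F K) with hφdef
  have hφinj : Function.Injective φ :=
    MvPolynomial.map_injective _ (algebraMap F K).injective
  set M : Submodule K (MvPolynomial σ K) := Submodule.span K (φ '' J) with hM
  -- Step 1: the extended ideal is contained in the `K`-span of `φ '' J`.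
  have key : ∀ x ∈ J.map φ, x ∈ M := by
    intro x hx
    rw [Ideal.map, Ideal.span] at hx
    have main : ∀ x ∈ Submodule.span (MvPolynomial σ K) (φ '' J),
        ∀ p : MvPolynomial σ K, p * x ∈ M := by
      intro x hx
      refine Submodule.span_induction ?_ ?_ ?_ ?_ hx
      · rintro _ ⟨f, hfJ, rfl⟩ p
        rw [p.as_sum, Finset.sum_mul]
        refine Submodule.sum_mem _ fun m _ => ?_
        have h1 : (monomial m (p.coeff m) : MvPolynomial σ K) * φ f
            = p.coeff m • φ ((monomial m 1) * f) := by
          rw [map_mul]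
          have : φ ((monomial m 1 : MvPolynomial σ F)) = monomial m 1 := by
            simp [hφdef, MvPolynomial.map_monomial]
          rw [this, ← smul_mul_assoc, MvPolynomial.smul_monomial, smul_eq_mul, mul_one]
        rw [h1]
        exact Submodule.smul_mem _ _
          (Submodule.subset_span ⟨_, J.mul_mem_left _ hfJ, rfl⟩)
      · intro p; rw [mul_zero]; exact M.zero_mem
      · intro a b _ _ ha hb p
        rw [mul_add]; exact M.add_mem (ha p) (hb p)
      · intro a y _ hy p
        rw [smul_eq_mul, ← mul_assoc]
        exact hy (p * a)
    simpa using main x hx 1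
  have hgM : φ g ∈ M := key _ hg
  -- Step 2: extract a finite representation.
  rw [hM] at hgM
  obtain ⟨c, hcs, hcsum⟩ := Submodule.mem_span_set.mp hgM
  -- Step 3: an `F`-linear retraction of `K` onto `F`.
  obtain ⟨π, hπ⟩ := (Algebra.linearMap F K).exists_leftInverse_of_injective
    (LinearMap.ker_eq_bot.mpr (algebraMap F K).injective)
  have hπ1 : ∀ a : F, π (algebraMap F K a) = a := fun a => by
    have := LinearMap.congr_fun hπ a
    simpa using this
  -- Step 4: components
  set ψ : MvPolynomial σ K → MvPolynomial σ F := Function.invFun φ with hψ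
  have hψ1 : ∀ i ∈ c.support, φ (ψ i) = i ∧ ψ i ∈ J := by
    intro i hi
    obtain ⟨f, hfJ, rfl⟩ := hcs hi
    have : ψ (φ f) = f := Function.leftInverse_invFun hφinj f
    rw [this]; exact ⟨rfl, hfJ⟩
  have hgeq : g = ∑ i ∈ c.support, π (c i) • ψ i := by
    apply MvPolynomial.ext
    intro m
    have h2 : algebraMap F K (g.coeff m)
        = ∑ i ∈ c.support, c i * algebraMap F K ((ψ i).coeff m) := by
      have := congrArg (MvPolynomial.coeff m) hcsum
      rw [Finsupp.sum, MvPolynomial.coeff_sum] at this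
      rw [hφdef] at this
      rw [MvPolynomial.coeff_map] at this
      rw [← this]
      refine Finset.sum_congr rfl fun i hi => ?_
      rw [MvPolynomial.coeff_smul, smul_eq_mul]
      congr 1
      conv_lhs => rw [← (hψ1 i hi).1]
      rw [hφdef, MvPolynomial.coeff_map]
    have h3 := congrArg π h2
    rw [hπ1, map_sum] at h3
    rw [h3, MvPolynomial.coeff_sum]
    refine Finset.sum_congr rfl fun i hi => ?_
    rw [MvPolynomial.coeff_smul, smul_eq_mul]
    have : c i * algebraMap F K ((ψ i).coeff m) = (ψ i).coeff m • c i := by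
      rw [Algebra.smul_def, mul_comm]
    rw [this, map_smul, smul_eq_mul, mul_comm]
  rw [hgeq]
  refine Ideal.sum_mem _ fun i hi => ?_
  exact Submodule.smul_of_tower_mem J _ (hψ1 i hi).2

/-- Homogeneous Nullstellensatz: let `F` be a field and `S = F[X₀, …, Xₙ]` graded by
total degree.  If `J` is a homogeneous ideal of `S` that is non-saturated (it does not
contain all homogeneous polynomials of degree `≥ k` for any `k`), then `J` has a
non-trivial zero over an algebraic closure `K` of `F`. -/
theorem nonsaturated_homogeneous_ideal_has_projective_zero
    (F : Type*) [Field F] (n : ℕ)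
    (J : Ideal (MvPolynomial (Fin (n + 1)) F))
    (hhom : ∀ f ∈ J, ∀ k : ℕ, MvPolynomial.homogeneousComponent k f ∈ J)
    (hnonsat : ¬ ∃ k₀ : ℕ, ∀ k ≥ k₀, ∀ f : MvPolynomial (Fin (n + 1)) F,
      f.IsHomogeneous k → f ∈ J) :
    ∃ x : Fin (n + 1) → AlgebraicClosure F, x ≠ 0 ∧
      ∀ f ∈ J, MvPolynomial.aeval x f = 0 := by
  classical
  by_contra hcon
  push_neg at hcon
  set K := AlgebraicClosure F
  set φ : MvPolynomial (Fin (n + 1)) F →+* MvPolynomial (Fin (n + 1)) K :=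
    MvPolynomial.map (algebraMap F K) with hφdef
  set I : Ideal (MvPolynomial (Fin (n + 1)) K) := J.map φ with hI
  -- the zero locus of the extended ideal is contained in `{0}`
  have hzero : MvPolynomial.zeroLocus K I ⊆ {0} := by
    intro x hx
    by_contra hx0
    obtain ⟨f, hfJ, hfx⟩ := hcon x hx0
    apply hfx
    have h1 := hx (φ f) (Ideal.mem_map_of_mem φ hfJ)
    rwa [hφdef, MvPolynomial.aeval_map_algebraMap] at h1
  -- each variable lies in the radical of `I`
  have hX : ∀ i : Fin (n + 1),
      (MvPolynomial.X i : MvPolynomial (Fin (n + 1)) K) ∈ I.radical := by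
    intro i
    rw [← MvPolynomial.vanishingIdeal_zeroLocus_eq_radical (K := K)]
    intro x hx
    have hx0 : x = 0 := hzero hx
    subst hx0
    simp [MvPolynomial.mem_vanishingIdeal_singleton_iff]
  choose N hN using fun i => hX i
  -- descend: powers of variables lie in `J`
  have hXJ : ∀ i : Fin (n + 1),
      (MvPolynomial.X i : MvPolynomial (Fin (n + 1)) F) ^ (N i + 1) ∈ J := by
    intro i
    refine mem_of_map_mem_map (K := K) J _ ?_
    have hmap : MvPolynomial.map (algebraMap F K)
        ((MvPolynomial.X i : MvPolynomial (Fin (n + 1)) F) ^ (N i + 1))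
        = (MvPolynomial.X i : MvPolynomial (Fin (n + 1)) K) ^ (N i + 1) := by
      rw [map_pow, MvPolynomial.map_X]
    rw [hmap]
    rw [pow_succ]
    exact I.mul_mem_right _ (hN i)
  apply hnonsat
  refine ⟨∑ i : Fin (n + 1), (N i + 1), fun k hk f hf => ?_⟩
  rw [f.as_sum]
  refine Ideal.sum_mem _ fun α hα => ?_
  have hcoeff : f.coeff α ≠ 0 := MvPolynomial.mem_support_iff.mp hα
  have hdeg : α.degree = k := by
    by_contra h
    exact hcoeff (hf.coeff_eq_zero h)
  have hdeg' : (∑ i : Fin (n + 1), α i) = k := by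
    rw [← hdeg, Finsupp.degree]
    exact (Finset.sum_subset (Finset.subset_univ _)
      (fun i _ hi => Finsupp.notMem_support_iff.mp hi)).symm
  have hex : ∃ i, N i + 1 ≤ α i := by
    by_contra h
    push_neg at h
    have : (∑ i : Fin (n + 1), α i) < ∑ i : Fin (n + 1), (N i + 1) :=
      Finset.sum_lt_sum_of_nonempty Finset.univ_nonempty fun i _ => h i
    omega
  obtain ⟨i, hi⟩ := hex
  have hmono : (MvPolynomial.monomial α (f.coeff α) : MvPolynomial (Fin (n + 1)) F)
      = MvPolynomial.monomial (α - Finsupp.single i (N i + 1)) (f.coeff α)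
        * MvPolynomial.X i ^ (N i + 1) := by
    rw [MvPolynomial.X_pow_eq_monomial, MvPolynomial.monomial_mul, mul_one,
      tsub_add_cancel_of_le (Finsupp.single_le_iff.mpr hi)]
  rw [hmono]
  exact J.mul_mem_left _ (hXJ i)
end

section
/- Let F be a field and S = F[X_0, X_1, ..., X_n] the polynomial ring graded by total degree. If J is a non-saturated homogeneous ideal of S, then there exists an ideal K of S containing J such that K is non-saturated and the quotient ring S/K is finite-dimensional as an F-vector space. -/
open MvPolynomial

private lemma finsupp_degree_add {σ : Type*} (a b : σ →₀ ℕ) :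
    (a + b).degree = a.degree + b.degree := by
  simp only [Finsupp.degree_eq_weight_one, map_add]

private lemma finsupp_degree_single {σ : Type*} (i : σ) (k : ℕ) :
    (Finsupp.single i k).degree = k := by
  classical
  rcases eq_or_ne k 0 with rfl | hk
  · simp [Finsupp.degree]
  · exact Finsupp.degree_single i k

private lemma finsupp_split {σ : Type*} :
    ∀ (p : ℕ) {q : ℕ} (d : σ →₀ ℕ), d.degree = p + q →
      ∃ d₁ d₂ : σ →₀ ℕ, d₁ + d₂ = d ∧ d₁.degree = p ∧ d₂.degree = q
  | 0, q, d, h => ⟨0, d, by simp, by simp [Finsupp.degree], by simpa using h⟩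
  | (p+1), q, d, h => by
      classical
      obtain ⟨d₁, d₂, hsum, h1, h2⟩ := finsupp_split p (q := q + 1) d (by omega)
      have hd2 : d₂ ≠ 0 := by
        intro h0
        rw [h0] at h2
        simp [Finsupp.degree] at h2
      obtain ⟨i, hi⟩ := Finsupp.ne_iff.mp hd2
      simp only [Finsupp.coe_zero, Pi.zero_apply] at hi
      have hile : 1 ≤ d₂ i := Nat.one_le_iff_ne_zero.mpr hi
      refine ⟨d₁ + Finsupp.single i 1, d₂ - Finsupp.single i 1, ?_, ?_, ?_⟩
      · rw [← hsum]
        ext j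
        simp only [Finsupp.add_apply, Finsupp.tsub_apply, Finsupp.single_apply]
        rcases eq_or_ne i j with rfl | hij
        · rw [if_pos rfl]; omega
        · rw [if_neg hij]; omega
      · rw [finsupp_degree_add, h1, finsupp_degree_single]
      · have hrec : Finsupp.single i 1 + (d₂ - Finsupp.single i 1) = d₂ := by
          ext j
          simp only [Finsupp.add_apply, Finsupp.tsub_apply, Finsupp.single_apply]
          rcases eq_or_ne i j with rfl | hij
          · rw [if_pos rfl]; omega
          · rw [if_neg hij]; omega
        have := congrArg Finsupp.degree hrec
        rw [finsupp_degree_add, finsupp_degree_single, h2] at this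
        omega

/-- If an ideal `I₁` contains all homogeneous polynomials of degree `p` and `I₂` contains all
homogeneous polynomials of degree `q`, then `I₁ * I₂` contains all those of degree `p + q`. -/
private lemma homog_mem_mul {F : Type*} [CommRing F] {σ : Type*}
    (I₁ I₂ : Ideal (MvPolynomial σ F)) (p q : ℕ)
    (h1 : ∀ f : MvPolynomial σ F, f.IsHomogeneous p → f ∈ I₁)
    (h2 : ∀ f : MvPolynomial σ F, f.IsHomogeneous q → f ∈ I₂) :
    ∀ f : MvPolynomial σ F, f.IsHomogeneous (p + q) → f ∈ I₁ * I₂ := by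
  intro f hf
  rw [f.as_sum]
  apply Ideal.sum_mem
  intro d hd
  have hdeg : d.degree = p + q := by
    rw [Finsupp.degree_eq_weight_one]
    exact hf (mem_support_iff.mp hd)
  obtain ⟨d₁, d₂, hsum, hd1, hd2⟩ := finsupp_split p d hdeg
  have hmono : (monomial d (coeff d f) : MvPolynomial σ F)
      = monomial d₁ (coeff d f) * monomial d₂ 1 := by
    rw [monomial_mul, mul_one, hsum]
  rw [hmono]
  exact Ideal.mul_mem_mul (h1 _ (isHomogeneous_monomial _ hd1))
    (h2 _ (isHomogeneous_monomial _ hd2))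

private lemma sat_up {F : Type*} [CommRing F] {σ : Type*}
    (I : Ideal (MvPolynomial σ F)) (k : ℕ)
    (h : ∀ f : MvPolynomial σ F, f.IsHomogeneous k → f ∈ I) :
    ∀ k' ≥ k, ∀ f : MvPolynomial σ F, f.IsHomogeneous k' → f ∈ I := by
  intro k' hk' f hf
  have : f ∈ (⊤ : Ideal (MvPolynomial σ F)) * I := by
    apply homog_mem_mul ⊤ I (k' - k) k (fun _ _ => trivial) h
    rwa [Nat.sub_add_cancel hk']
  rwa [Ideal.top_mul] at this

private lemma degree_one_single {σ : Type*} (d : σ →₀ ℕ) (h : d.degree = 1) :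
    ∃ i, d = Finsupp.single i 1 := by
  classical
  have hd : d ≠ 0 := by
    intro h0; rw [h0] at h; simp [Finsupp.degree] at h
  obtain ⟨i, hi⟩ := Finsupp.ne_iff.mp hd
  simp only [Finsupp.coe_zero, Pi.zero_apply] at hi
  have hile : d i ≤ 1 := h ▸ Finsupp.le_degree i d
  have hdi : d i = 1 := by omega
  refine ⟨i, ?_⟩
  ext j
  rcases eq_or_ne i j with rfl | hij
  · simp [hdi]
  · simp only [Finsupp.single_apply, if_neg hij]
    by_contra hj
    have hjmem : j ∈ d.support := Finsupp.mem_support_iff.mpr hj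
    have himem : i ∈ d.support := Finsupp.mem_support_iff.mpr hi
    have hsub : ({i, j} : Finset σ) ⊆ d.support := by
      intro x hx
      simp only [Finset.mem_insert, Finset.mem_singleton] at hx
      rcases hx with rfl | rfl <;> assumption
    have hle : ∑ x ∈ ({i, j} : Finset σ), d x ≤ d.degree :=
      Finset.sum_le_sum_of_subset hsub
    rw [Finset.sum_pair hij, h] at hle
    omega

private lemma exists_maximal_mem {R : Type*} [CommRing R] [IsNoetherianRing R]
    (A : Set (Ideal R)) (hA : A.Nonempty) : ∃ K ∈ A, ∀ I ∈ A, ¬ K < I :=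
  (set_has_maximal_iff_noetherian.mpr (inferInstance : IsNoetherian R R)) A hA

/-- Let `F` be a field and `S = F[X₀, …, Xₙ]` graded by total degree.  If `J` is a
non-saturated homogeneous ideal of `S` (it does not contain all homogeneous polynomials
of degree `≥ k` for any `k`), then there is an ideal `K ⊇ J` which is still
non-saturated and such that `S/K` is a finite-dimensional `F`-vector space. -/
theorem exists_nonsaturated_ideal_with_finite_quotient
    (F : Type*) [Field F] (n : ℕ)
    (J : Ideal (MvPolynomial (Fin (n + 1)) F))
    (hhom : ∀ f ∈ J, ∀ k : ℕ, MvPolynomial.homogeneousComponent k f ∈ J)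
    (hnonsat : ¬ ∃ k₀ : ℕ, ∀ k ≥ k₀, ∀ f : MvPolynomial (Fin (n + 1)) F,
      f.IsHomogeneous k → f ∈ J) :
    ∃ K : Ideal (MvPolynomial (Fin (n + 1)) F), J ≤ K ∧
      (¬ ∃ k₀ : ℕ, ∀ k ≥ k₀, ∀ f : MvPolynomial (Fin (n + 1)) F,
        f.IsHomogeneous k → f ∈ K) ∧
      FiniteDimensional F (MvPolynomial (Fin (n + 1)) F ⧸ K) := by
  classical
  set S := MvPolynomial (Fin (n + 1)) F with hS
  -- non-saturation predicate
  let NS : Ideal S → Prop := fun I => ∀ k : ℕ, ∃ f : S, f.IsHomogeneous k ∧ f ∉ I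
  have hNSJ : NS J := by
    intro k
    by_contra h
    push_neg at h
    exact hnonsat ⟨k, sat_up J k h⟩
  -- the set of non-saturated ideals containing J has a maximal element
  let A : Set (Ideal S) := {I | J ≤ I ∧ NS I}
  obtain ⟨K, ⟨hJK, hNSK⟩, hKmax⟩ := exists_maximal_mem A ⟨J, le_rfl, hNSJ⟩
  have hKmax' : ∀ I : Ideal S, J ≤ I → NS I → K ≤ I → I = K := by
    intro I hJI hNSI hKI
    by_contra hne
    exact hKmax I ⟨hJI, hNSI⟩ (lt_of_le_of_ne hKI fun h => hne h.symm)
  -- every strictly bigger ideal is saturated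
  have hsat' : ∀ a : S, a ∉ K → ∃ p : ℕ, ∀ f : S, f.IsHomogeneous p → f ∈ K ⊔ Ideal.span {a} := by
    intro a ha
    by_contra h
    push_neg at h
    have hmem : K ⊔ Ideal.span {a} = K := by
      apply hKmax' _ (le_trans hJK le_sup_left) _ le_sup_left
      intro k
      obtain ⟨f, hf1, hf2⟩ := h k
      exact ⟨f, hf1, hf2⟩
    exact ha (hmem ▸ (Submodule.mem_sup_right (Ideal.mem_span_singleton_self a) :
      a ∈ K ⊔ Ideal.span {a}))
  have hKne : K ≠ ⊤ := by
    obtain ⟨f, _, hfK⟩ := hNSK 0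
    intro h
    exact hfK (h ▸ Submodule.mem_top)
  -- K is prime
  have hprime : K.IsPrime := by
    refine ⟨hKne, ?_⟩
    intro a b hab
    by_contra hcon
    push_neg at hcon
    obtain ⟨ha, hb⟩ := hcon
    obtain ⟨p, hp⟩ := hsat' a ha
    obtain ⟨q, hq⟩ := hsat' b hb
    have hmul : (K ⊔ Ideal.span {a}) * (K ⊔ Ideal.span {b}) ≤ K := by
      rw [Ideal.mul_le]
      intro r hr s hs
      obtain ⟨k₁, hk₁, x, hx, rfl⟩ := Submodule.mem_sup.mp hr
      obtain ⟨k₂, hk₂, y, hy, rfl⟩ := Submodule.mem_sup.mp hs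
      obtain ⟨c, rfl⟩ := Ideal.mem_span_singleton'.mp hx
      obtain ⟨c', rfl⟩ := Ideal.mem_span_singleton'.mp hy
      have heq : (k₁ + c * a) * (k₂ + c' * b)
          = k₁ * (k₂ + c' * b) + (c * a) * k₂ + (c * c') * (a * b) := by ring
      rw [heq]
      exact Ideal.add_mem _ (Ideal.add_mem _ (Ideal.mul_mem_right _ _ hk₁)
        (Ideal.mul_mem_left _ _ hk₂)) (Ideal.mul_mem_left _ _ hab)
    obtain ⟨f, hfh, hfK⟩ := hNSK (p + q)
    exact hfK (hmul (homog_mem_mul _ _ p q hp hq f hfh))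
  -- K is a maximal ideal
  have hKmaxideal : K.IsMaximal := by
    by_contra hnm
    have hX : ∀ i : Fin (n + 1), (X i : S) ∈ K := by
      intro i
      have hjac : K.jacobson = K :=
        (isJacobsonRing_iff_prime_eq.mp (inferInstance : IsJacobsonRing S)) K hprime
      have hjd : K.jacobson = sInf {J : Ideal S | K ≤ J ∧ J.IsMaximal} := rfl
      rw [← hjac, hjd]
      apply Ideal.mem_sInf.mpr
      rintro M ⟨hKM, hM⟩
      have hMne : M ≠ K := fun h => hnm (h ▸ hM)
      have hsatM : ¬ NS M := by
        intro hns
        exact hMne (hKmax' M (le_trans hJK hKM) hns hKM)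
      simp only [NS, not_forall, not_exists, not_and, not_not] at hsatM
      obtain ⟨p, hpM⟩ := hsatM
      have hXp : (X i : S) ^ p ∈ M := by
        apply hpM
        exact isHomogeneous_X_pow i p
      exact hM.isPrime.mem_of_pow_mem p hXp
    obtain ⟨f, hf1, hfK⟩ := hNSK 1
    apply hfK
    rw [f.as_sum]
    apply Ideal.sum_mem
    intro d hd
    have hdeg : d.degree = 1 := by
      rw [Finsupp.degree_eq_weight_one]
      exact hf1 (mem_support_iff.mp hd)
    obtain ⟨i, rfl⟩ := degree_one_single d hdeg
    have : (monomial (Finsupp.single i 1) (coeff (Finsupp.single i 1) f) : S)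
        = C (coeff (Finsupp.single i 1) f) * X i := by
      rw [X, C_mul_monomial, mul_one]
    rw [this]
    exact Ideal.mul_mem_left _ _ (hX i)
  refine ⟨K, hJK, ?_, ?_⟩
  · rintro ⟨k₀, hk₀⟩
    obtain ⟨f, hf1, hf2⟩ := hNSK k₀
    exact hf2 (hk₀ k₀ le_rfl f hf1)
  · haveI := hKmaxideal
    letI : Field (S ⧸ K) := Ideal.Quotient.field K
    haveI : Algebra.FiniteType F (S ⧸ K) :=
      Algebra.FiniteType.of_surjective
        (Ideal.Quotient.mkₐ F K) (Ideal.Quotient.mkₐ_surjective F K)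
    exact finite_of_finite_type_of_isJacobsonRing F (S ⧸ K)
end

section
/- Let S = ⊕_{k≥0} S_k be a commutative graded ring, P = ⊕_{k≥0} P_k a graded S-module, and x ∈ S_1. Suppose the component P_j is finitely generated as an S_0-module and P_j is contained in the submodule (1 − x)·P. Then there exists a natural number n such that xⁿ·P_j = 0. -/
open DirectSum

section aux
variable {S : Type*} [CommRing S] (𝒜 : ℕ → AddSubgroup S) [GradedRing 𝒜]
    {P : Type*} [AddCommGroup P] [Module S P] (ℳ : ℕ → AddSubgroup P)
    [SetLike.GradedSMul 𝒜 ℳ] [DirectSum.Decomposition ℳ]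
    {x : S} (hx : x ∈ 𝒜 1)

include hx in
lemma decompose_xsmul_succ (w : P) (k : ℕ) :
    ((decompose ℳ (x • w)) (k + 1) : P) = x • ((decompose ℳ w k : P)) := by
  induction w using DirectSum.Decomposition.inductionOn ℳ with
  | zero => simp
  | homogeneous m =>
      rename_i i
      have hmem : x • (m : P) ∈ ℳ (1 + i) := SetLike.GradedSMul.smul_mem hx m.2
      have h1 : decompose ℳ (x • (m:P)) = DirectSum.of _ (1+i) (⟨x • (m:P), hmem⟩ : ℳ (1+i)) := by
        exact decompose_coe ℳ ⟨_, hmem⟩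
      rw [h1, decompose_coe, coe_of_apply, coe_of_apply]
      by_cases h : i = k
      · subst h; simp [Nat.add_comm]
      · rw [if_neg (by omega), if_neg h]
        simp
  | add m m' hm hm' =>
      rw [smul_add, decompose_add, decompose_add, DirectSum.add_apply, DirectSum.add_apply]
      push_cast
      rw [hm, hm', smul_add]

include hx in
lemma decompose_xsmul_zero (w : P) :
    ((decompose ℳ (x • w)) 0 : P) = 0 := by
  induction w using DirectSum.Decomposition.inductionOn ℳ with
  | zero => simp
  | homogeneous m =>
      rename_i i
      have hmem : x • (m : P) ∈ ℳ (1 + i) := SetLike.GradedSMul.smul_mem hx m.2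
      have h1 : decompose ℳ (x • (m:P)) = DirectSum.of _ (1+i) (⟨x • (m:P), hmem⟩ : ℳ (1+i)) := by
        exact decompose_coe ℳ ⟨_, hmem⟩
      rw [h1, coe_of_apply, if_neg (by omega)]
      simp
  | add m m' hm hm' =>
      rw [smul_add, decompose_add, DirectSum.add_apply]
      push_cast
      rw [hm, hm', add_zero]

include hx in
lemma pow_smul_eq_zero_of_mem {j : ℕ} {v : P} (hv : v ∈ ℳ j)
    (hsub : ∃ u : P, v = (1 - x) • u) : ∃ n : ℕ, x ^ n • v = 0 := by
  obtain ⟨u, hvd⟩ := hsub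
  have hvu : v = u - x • u := by rw [hvd, sub_smul, one_smul]
  -- component equations
  have hd : ∀ d : ℕ, ((decompose ℳ v) d : P)
      = ((decompose ℳ u) d : P) - ((decompose ℳ (x • u)) d : P) := by
    intro d
    rw [hvu, decompose_sub, DirectSum.sub_apply]
    push_cast
    ring
  have hvcomp : ∀ d : ℕ, ((decompose ℳ v) d : P) = if j = d then v else 0 := by
    intro d
    rw [decompose_of_mem ℳ hv, coe_of_apply]
    split <;> simp
  -- u_d = 0 for d < j
  have hlow : ∀ d, d < j → ((decompose ℳ u) d : P) = 0 := by
    intro d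
    induction d with
    | zero =>
        intro h0
        have := hd 0
        rw [hvcomp 0, if_neg (by omega), decompose_xsmul_zero 𝒜 ℳ hx, sub_zero] at this
        exact this.symm
    | succ d ih =>
        intro hlt
        have := hd (d + 1)
        rw [hvcomp _, if_neg (by omega), decompose_xsmul_succ 𝒜 ℳ hx, ih (by omega),
          smul_zero, sub_zero] at this
        exact this.symm
  -- v = u_j
  have hvj : ((decompose ℳ u) j : P) = v := by
    have := hd j
    rw [hvcomp j, if_pos rfl] at this
    match j, hv, this with
    | 0, hv, this =>
        rw [decompose_xsmul_zero 𝒜 ℳ hx, sub_zero] at this; exact this.symm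
    | (d+1), hv, this =>
        rw [decompose_xsmul_succ 𝒜 ℳ hx, hlow d (by omega), smul_zero, sub_zero] at this
        exact this.symm
  -- u_{j+m} = x^m • v
  have hhigh : ∀ m : ℕ, ((decompose ℳ u) (j + m) : P) = x ^ m • v := by
    intro m
    induction m with
    | zero => rw [Nat.add_zero, hvj, pow_zero, one_smul]
    | succ m ih =>
        have := hd (j + m + 1)
        rw [hvcomp _, if_neg (by omega), decompose_xsmul_succ 𝒜 ℳ hx, ih] at this
        have h2 : ((decompose ℳ u) (j + m + 1) : P) = x • x ^ m • v := by
          linear_combination (norm := abel) this.symm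
        rw [show j + (m+1) = j + m + 1 from rfl, h2, pow_succ, mul_comm, mul_smul]
  -- finite support
  classical
  obtain ⟨N, hN⟩ : ∃ N : ℕ, (decompose ℳ u) (j + N) = 0 := by
    by_contra hc
    push_neg at hc
    have : ∀ N : ℕ, j + N ∈ (decompose ℳ u).support := fun N =>
      DFinsupp.mem_support_iff.mpr (hc N)
    have hinj : Function.Injective (fun N : ℕ => j + N) := fun a b h => by
      simp only [Nat.add_left_cancel_iff] at h; exact h
    exact Set.infinite_of_injective_forall_mem (f := fun N : ℕ => j + N) hinj this
      (Set.Finite.subset (decompose ℳ u).support.finite_toSet (fun a ha => ha))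
  refine ⟨N, ?_⟩
  have := hhigh N
  rw [hN] at this
  simpa using this.symm
end aux

/-- Let `P` be a graded `S`-module and `x ∈ S₁`.  If the component `P_j` is finitely
generated as an `S₀`-module and `P_j ⊆ (1 - x) • P`, then `xⁿ • P_j = 0` for some
natural number `n`. -/
theorem pow_smul_eq_zero_of_component_sub_one_sub_smul
    {S : Type*} [CommRing S] (𝒜 : ℕ → AddSubgroup S) [GradedRing 𝒜]
    {P : Type*} [AddCommGroup P] [Module S P] (ℳ : ℕ → AddSubgroup P)
    [SetLike.GradedSMul 𝒜 ℳ] [DirectSum.Decomposition ℳ]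
    (x : S) (hx : x ∈ 𝒜 1) (j : ℕ)
    (hfg : ∃ T : Finset P, (T : Set P) ⊆ (ℳ j : Set P) ∧
      grSMul (𝒜 0) (T : Set P) = ℳ j)
    (hsub : ∀ v ∈ ℳ j, ∃ u : P, v = (1 - x) • u) :
    ∃ n : ℕ, ∀ v ∈ ℳ j, x ^ n • v = 0 := by
  classical
  obtain ⟨T, hT, hgen⟩ := hfg
  have key : ∀ t ∈ T, ∃ n : ℕ, x ^ n • t = 0 := fun t ht =>
    pow_smul_eq_zero_of_mem 𝒜 ℳ hx (hT ht) (hsub t (hT ht))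
  choose! f hf using key
  set n := T.sup f with hn
  have hkill : ∀ t ∈ T, x ^ n • t = 0 := by
    intro t ht
    have hle : f t ≤ n := Finset.le_sup ht
    have : n = (n - f t) + f t := by omega
    rw [this, pow_add, mul_smul, hf t ht, smul_zero]
  refine ⟨n, fun v hv => ?_⟩
  rw [← hgen] at hv
  let K : AddSubgroup P :=
    { carrier := {p | x ^ n • p = 0}
      add_mem' := fun {a b} ha hb => by
        simp only [Set.mem_setOf_eq] at *
        rw [smul_add, ha, hb, add_zero]
      zero_mem' := by simp
      neg_mem' := fun {a} ha => by
        simp only [Set.mem_setOf_eq] at *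
        rw [smul_neg, ha, neg_zero] }
  have hsubK : {y : P | ∃ a ∈ 𝒜 0, ∃ t ∈ (T : Set P), y = a • t} ⊆ K := by
    rintro p ⟨a, ha, t, ht, rfl⟩
    show x ^ n • a • t = 0
    rw [smul_comm, hkill t ht, smul_zero]
  exact (AddSubgroup.closure_le K).mpr hsubK hv
end

section
/- Let S = ⊕_{k≥0} S_k be a commutative graded ring and P = ⊕_{k≥0} P_k a graded S-module such that each P_k is finitely generated as an S_0-module and P is long (P_j ≠ 0 for arbitrarily large j). Let x ∈ S_1 be such that x·P_k = P_{k+1} for all sufficiently large indices k. Then the S-submodule (1 − x)·P of P is not saturated: for every index k there exists an index j ≥ k such that P_j is not contained in (1 − x)·P. -/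
open DirectSum

section Aux

variable {S : Type*} [CommRing S] (𝒜 : ℕ → AddSubgroup S)
    {P : Type*} [AddCommGroup P] [Module S P] (ℳ : ℕ → AddSubgroup P)
    [SetLike.GradedSMul 𝒜 ℳ] [DirectSum.Decomposition ℳ]

lemma aux_shift {x : S} (hx : x ∈ 𝒜 1) (u : P) :
    (∀ i : ℕ, ((DirectSum.decompose ℳ (x • u)) (i + 1) : P)
        = x • ((DirectSum.decompose ℳ u) i : P))
    ∧ ((DirectSum.decompose ℳ (x • u)) 0 : P) = 0 := by
  induction u using DirectSum.Decomposition.inductionOn ℳ with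
  | zero => simp
  | @homogeneous l m =>
    obtain ⟨w, hw⟩ := m
    have hxw : x • w ∈ ℳ (1 + l) := SetLike.GradedSMul.smul_mem hx hw
    have hxw' : x • w ∈ ℳ (l + 1) := by rwa [add_comm] at hxw
    constructor
    · intro i
      rcases eq_or_ne i l with rfl | hne
      · rw [DirectSum.decompose_of_mem_same ℳ hxw',
          DirectSum.decompose_of_mem_same ℳ hw]
      · rw [DirectSum.decompose_of_mem_ne ℳ hxw' (by omega),
          DirectSum.decompose_of_mem_ne ℳ hw (Ne.symm hne), smul_zero]
    · rw [DirectSum.decompose_of_mem_ne ℳ hxw' (by omega)]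
  | add a b ha hb =>
    constructor
    · intro i
      rw [smul_add, decompose_add, decompose_add, DirectSum.add_apply, DirectSum.add_apply,
        AddSubgroup.coe_add, AddSubgroup.coe_add, ha.1 i, hb.1 i, smul_add]
    · rw [smul_add, decompose_add, DirectSum.add_apply, AddSubgroup.coe_add, ha.2, hb.2, add_zero]

end Aux

section Aux2
variable {S : Type*} [CommRing S] {𝒜 : ℕ → AddSubgroup S}
    {P : Type*} [AddCommGroup P] [Module S P] {ℳ : ℕ → AddSubgroup P}
    [SetLike.GradedSMul 𝒜 ℳ] [DirectSum.Decomposition ℳ]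

lemma aux_key {x : S} (hx : x ∈ 𝒜 1) {j : ℕ} (hj : 1 ≤ j) {v : P} (hv : v ∈ ℳ j)
    {u : P} (huv : v = (1 - x) • u) : ∃ m : ℕ, x ^ m • v = 0 := by
  obtain ⟨jj, rfl⟩ : ∃ jj, j = jj + 1 := ⟨j - 1, by omega⟩
  have hu : u = v + x • u := by
    rw [huv, sub_smul, one_smul]; abel
  -- components of u below degree j vanish
  have hlow : ∀ i ≤ jj, ((DirectSum.decompose ℳ u) i : P) = 0 := by
    intro i hi
    induction i with
    | zero =>
      conv_lhs => rw [hu]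
      rw [decompose_add, DirectSum.add_apply, AddSubgroup.coe_add,
        DirectSum.decompose_of_mem_ne ℳ hv (by omega), (aux_shift 𝒜 ℳ hx u).2, add_zero]
    | succ i ih =>
      conv_lhs => rw [hu]
      rw [decompose_add, DirectSum.add_apply, AddSubgroup.coe_add,
        DirectSum.decompose_of_mem_ne ℳ hv (by omega), (aux_shift 𝒜 ℳ hx u).1 i,
        ih (by omega), smul_zero, add_zero]
  -- components of u from degree j on are x ^ m • v
  have hhigh : ∀ m : ℕ, ((DirectSum.decompose ℳ u) (jj + 1 + m) : P) = x ^ m • v := by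
    intro m
    induction m with
    | zero =>
      conv_lhs => rw [hu]
      rw [decompose_add, DirectSum.add_apply, AddSubgroup.coe_add,
        DirectSum.decompose_of_mem_same ℳ hv]
      have : jj + 1 + 0 = jj + 1 := rfl
      rw [(aux_shift 𝒜 ℳ hx u).1 jj, hlow jj le_rfl, smul_zero, add_zero, pow_zero, one_smul]
    | succ m ih =>
      conv_lhs => rw [hu]
      have h1 : jj + 1 + (m + 1) = (jj + 1 + m) + 1 := by omega
      rw [h1, decompose_add, DirectSum.add_apply, AddSubgroup.coe_add,
        DirectSum.decompose_of_mem_ne ℳ hv (by omega), (aux_shift 𝒜 ℳ hx u).1 (jj + 1 + m),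
        ih, zero_add, pow_succ', mul_smul]
  -- finite support
  classical
  set N := (DirectSum.decompose ℳ u).support.sup id with hN
  refine ⟨N + 1, ?_⟩
  rw [← hhigh (N + 1)]
  have : (jj + 1 + (N + 1)) ∉ (DirectSum.decompose ℳ u).support := by
    intro hmem
    have := Finset.le_sup (f := id) hmem
    simp only [id] at this
    omega
  rw [DFinsupp.notMem_support_iff.mp this, ZeroMemClass.coe_zero]

end Aux2


/-- Let `P` be a long graded `S`-module whose components are finitely generated over
`S₀`, and let `x ∈ S₁` satisfy `x • P_k = P_{k+1}` for all sufficiently large `k`.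
Then the submodule `(1 - x) • P` is not saturated: for every `k` there is a `j ≥ k`
such that `P_j` is not contained in `(1 - x) • P`. -/
theorem one_sub_smul_submodule_not_saturated
    {S : Type*} [CommRing S] (𝒜 : ℕ → AddSubgroup S) [GradedRing 𝒜]
    {P : Type*} [AddCommGroup P] [Module S P] (ℳ : ℕ → AddSubgroup P)
    [SetLike.GradedSMul 𝒜 ℳ] [DirectSum.Decomposition ℳ]
    (hcomp_fg : ∀ k : ℕ, ∃ T : Finset P, (T : Set P) ⊆ (ℳ k : Set P) ∧
      grSMul (𝒜 0) (T : Set P) = ℳ k)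
    (hlong : ∀ k : ℕ, ∃ j ≥ k, ℳ j ≠ ⊥)
    (x : S) (hx : x ∈ 𝒜 1)
    (hxsurj : ∃ k₀ : ℕ, ∀ k ≥ k₀,
      (fun m : P => x • m) '' (ℳ k : Set P) = (ℳ (k + 1) : Set P)) :
    ∀ k : ℕ, ∃ j ≥ k,
      ¬ ((ℳ j : Set P) ⊆ {v : P | ∃ u : P, v = (1 - x) • u}) := by
  by_contra hcon
  push_neg at hcon
  obtain ⟨k, hk⟩ := hcon
  obtain ⟨k₀, hk₀⟩ := hxsurj
  set j := max (max k k₀) 1 with hjdef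
  have hjk : k ≤ j := le_trans (le_max_left _ _) (le_max_left _ _)
  have hjk0 : k₀ ≤ j := le_trans (le_max_right _ _) (le_max_left _ _)
  have hj1 : 1 ≤ j := le_max_right _ _
  obtain ⟨T, hTsub, hTgen⟩ := hcomp_fg j
  -- each generator is annihilated by a power of x
  have hT : ∀ t ∈ T, ∃ m : ℕ, x ^ m • t = 0 := by
    intro t ht
    have htj : t ∈ ℳ j := hTsub ht
    obtain ⟨u, hu⟩ := hk j hjk htj
    exact aux_key hx hj1 htj hu
  -- uniform annihilator for the generators
  classical
  choose f hf using hT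
  obtain ⟨M, hM⟩ : ∃ M : ℕ, ∀ t ∈ T, x ^ M • t = 0 := by
    refine ⟨T.attach.sup fun t => f t t.2, fun t ht => ?_⟩
    have hle : f t ht ≤ T.attach.sup fun t => f t t.2 :=
      Finset.le_sup (f := fun t : {y // y ∈ T} => f t.1 t.2) (Finset.mem_attach T ⟨t, ht⟩)
    calc x ^ (T.attach.sup fun t => f t t.2) • t
        = (x ^ ((T.attach.sup fun t => f t t.2) - f t ht) * x ^ f t ht) • t := by
          rw [← pow_add, Nat.sub_add_cancel hle]
      _ = x ^ ((T.attach.sup fun t => f t t.2) - f t ht) • (x ^ f t ht • t) := mul_smul _ _ _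
      _ = 0 := by rw [hf t ht, smul_zero]
  -- x ^ M annihilates all of ℳ j
  have hker : ∀ p ∈ ℳ j, x ^ M • p = 0 := by
    have hle : grSMul (𝒜 0) (T : Set P) ≤ (DistribSMul.toAddMonoidHom P (x ^ M)).ker := by
      rw [grSMul, AddSubgroup.closure_le]
      rintro p ⟨a, _, t, ht, rfl⟩
      simp only [SetLike.mem_coe, AddMonoidHom.mem_ker, DistribSMul.toAddMonoidHom_apply]
      rw [smul_smul, mul_comm, ← smul_smul, hM t ht, smul_zero]
    intro p hp
    rw [← hTgen] at hp
    exact hle hp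
  -- iterated surjectivity
  have hsurj_iter : ∀ m : ℕ, ∀ w ∈ ℳ (j + m), ∃ p ∈ ℳ j, w = x ^ m • p := by
    intro m
    induction m with
    | zero => exact fun w hw => ⟨w, hw, by rw [pow_zero, one_smul]⟩
    | succ m ih =>
      intro w hw
      have h1 : ((fun m : P => x • m) '' (ℳ (j + m) : Set P)) = (ℳ (j + m + 1) : Set P) :=
        hk₀ (j + m) (le_trans hjk0 (Nat.le_add_right _ _))
      have hw' : w ∈ (fun m : P => x • m) '' (ℳ (j + m) : Set P) := by
        rw [h1]; exact hw
      obtain ⟨w', hw', rfl⟩ := hw'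
      obtain ⟨p, hp, rfl⟩ := ih w' hw'
      exact ⟨p, hp, by rw [pow_succ', mul_smul]⟩
  -- all high components vanish
  obtain ⟨j', hj', hne⟩ := hlong (j + M)
  apply hne
  rw [AddSubgroup.eq_bot_iff_forall]
  intro w hw
  obtain ⟨m, rfl⟩ : ∃ m, j' = j + M + m := ⟨j' - (j + M), by omega⟩
  have hw' : w ∈ ℳ (j + (M + m)) := by rwa [← add_assoc]
  obtain ⟨p, hp, rfl⟩ := hsurj_iter (M + m) w hw'
  rw [add_comm M m, pow_add, mul_smul, hker p hp, smul_zero]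
end
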